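/- There exist absolute constants C, c, c₂ > 0 and c₁ > 1 (independent of N, r, λ) such that the following holds. Let r ≥ 2 be an integer, λ ∈ (0, 4^r), and let ρ, ρ' ∈ ℂ be two distinct roots of p(x) = (1−x)^{2r} − (−1)^r λ x^r with |ρ| ≠ 1. Then |ρ − ρ'| ≤ C λ^{1/(2r)}. Moreover, |ρ − ρ'| ≥ c₂ c₁^{−r} λ^{1/(2r)} if ρ' equals the complex conjugate of ρ or ρ' = ρ^{−1}, and |ρ − ρ'| ≥ c r^{−2} λ^{1/(2r)} otherwise. -/

import Mathlib

open Real

set_option maxHeartbeats 1000000 in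
private lemma sin_lb {x : ℝ} (h0 : 0 < x) (h2 : x ≤ π / 2) : x / π ≤ Real.sin x := by
  have hπ := Real.pi_gt_three
  rcases le_or_gt x 1 with h1 | h1
  · have hs := Real.sin_gt_sub_cube h0
    have hx2 : x ^ 2 ≤ 1 := by nlinarith
    have hx3 : x ^ 3 ≤ x := by nlinarith [mul_le_mul_of_nonneg_left hx2 h0.le]
    rw [div_le_iff₀ Real.pi_pos]
    nlinarith
  · have hs1 : Real.sin 1 ≥ 3/4 := by
      have := Real.sin_gt_sub_cube (by norm_num : (0:ℝ) < 1)
      nlinarith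
    have hmono : Real.sin 1 ≤ Real.sin x := by
      rcases eq_or_lt_of_le (le_of_lt h1) with h | h
      · rw [← h]
      · exact le_of_lt (Real.strictMonoOn_sin (by constructor <;> nlinarith) (by constructor <;> nlinarith) h)
    rw [div_le_iff₀ Real.pi_pos]
    nlinarith

set_option maxHeartbeats 1000000 in
private lemma sin_frac {r j : ℕ} (hj1 : 1 ≤ j) (hjr : j < r) :
    1 / (r:ℝ) ≤ Real.sin (π * j / r) := by
  have hrn : 0 < r := by omega
  have hr0 : (0:ℝ) < r := by exact_mod_cast hrn
  have hj0 : (1:ℝ) ≤ j := by exact_mod_cast hj1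
  have hjr' : (j:ℝ) ≤ (r:ℝ) - 1 := by
    have : (j:ℝ) + 1 ≤ r := by exact_mod_cast hjr
    linarith
  have hπ := Real.pi_pos
  rcases le_or_gt (π * j / r) (π / 2) with h | h
  · have h0 : 0 < π * j / r := by positivity
    have hs := sin_lb h0 h
    have he : π * j / r / π = j / r := by field_simp
    rw [he] at hs
    have : 1 / (r:ℝ) ≤ (j:ℝ) / r := by gcongr
    linarith
  · rw [← Real.sin_pi_sub]
    have h0 : 0 < π - π * j / r := by
      rw [sub_pos, div_lt_iff₀ hr0]
      nlinarith
    have h2 : π - π * j / r ≤ π / 2 := by linarith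
    have hs := sin_lb h0 h2
    have key : 1 / (r:ℝ) ≤ (π - π * j / r) / π := by
      rw [div_le_div_iff₀ hr0 hπ]
      have hd : (π - π * j / r) * r = π * r - π * j := by field_simp
      nlinarith
    linarith

set_option maxHeartbeats 1000000 in
private lemma root_unity_dist {r : ℕ} (hr : 1 ≤ r) {z : ℂ} (hz : z ^ r = 1) (h1 : z ≠ 1) :
    2 / (r:ℝ) ≤ ‖z - 1‖ := by
  have hr0 : r ≠ 0 := by omega
  haveI : NeZero r := ⟨hr0⟩
  obtain ⟨j, hjr, hje⟩ := (Complex.isPrimitiveRoot_exp r hr0).eq_pow_of_pow_eq_one hz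
  have hj1 : 1 ≤ j := by
    rcases Nat.eq_zero_or_pos j with h | h
    · exfalso; apply h1; rw [← hje, h, pow_zero]
    · exact h
  set θ : ℝ := 2 * π * j / r with hθ
  have hzz : z = Complex.exp (θ * Complex.I) := by
    rw [← hje, ← Complex.exp_nat_mul]
    congr 1
    rw [hθ]
    push_cast
    field_simp
  have habs : ‖z - 1‖ ^ 2 = 2 - 2 * Real.cos θ := by
    rw [Complex.sq_norm, Complex.normSq_apply, hzz, Complex.exp_mul_I]
    simp [Complex.cos_ofReal_re, Complex.sin_ofReal_re]
    nlinarith [Real.sin_sq_add_cos_sq θ]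
  have hhalf : Real.sin (θ/2) ^ 2 = 1/2 - Real.cos θ / 2 := by
    have := Real.sin_sq_eq_half_sub (θ/2)
    rw [show 2 * (θ/2) = θ by ring] at this
    linarith [this]
  have hfrac : 1 / (r:ℝ) ≤ Real.sin (θ/2) := by
    have : θ / 2 = π * j / r := by rw [hθ]; ring
    rw [this]
    exact sin_frac hj1 hjr
  have hrpos : (0:ℝ) < r := by exact_mod_cast Nat.pos_of_ne_zero hr0
  have h2 : (1/(r:ℝ))^2 ≤ Real.sin (θ/2)^2 := by
    apply sq_le_sq' <;> nlinarith [one_div_pos.mpr hrpos]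
  have habs2 : (2/(r:ℝ))^2 ≤ ‖z - 1‖^2 := by
    rw [habs]
    have h4 : (2/(r:ℝ))^2 = 4*(1/(r:ℝ))^2 := by ring
    linarith
  nlinarith [norm_nonneg (z - 1), div_nonneg (by norm_num : (0:ℝ) ≤ 2) hrpos.le]

set_option maxHeartbeats 1000000 in
private lemma abs_eq_one_of_quad {s : ℝ} (h0 : 0 < s) (h4 : s < 4) {ρ : ℂ}
    (h : ρ * ρ - (2 - (s:ℂ)) * ρ + 1 = 0) : ‖ρ‖ = 1 := by
  set x := ρ.re
  set y := ρ.im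
  have hre : x * x - y * y - (2 - s) * x + 1 = 0 := by
    have := congrArg Complex.re h
    simpa [Complex.mul_re, Complex.sub_re, Complex.add_re] using this
  have him : y * (2 * x - (2 - s)) = 0 := by
    have := congrArg Complex.im h
    simp [Complex.mul_im, Complex.sub_im, Complex.add_im] at this
    linarith
  rcases mul_eq_zero.mp him with hy | hx
  · exfalso
    nlinarith [sq_nonneg (x - (2-s)/2)]
  · have hx' : x = (2 - s) / 2 := by linarith
    have hsq : ‖ρ‖ ^ 2 = x * x + y * y := by
      rw [Complex.sq_norm, Complex.normSq_apply]
    have : x * x + y * y = 1 := by nlinarith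
    nlinarith [norm_nonneg ρ]

set_option maxHeartbeats 1000000 in
private lemma lam_facts {r : ℕ} (hr : 2 ≤ r) {lam : ℝ} (h0 : 0 < lam) (h4 : lam < 4 ^ r) :
    0 < lam ^ ((2*(r:ℝ))⁻¹) ∧ lam ^ ((2*(r:ℝ))⁻¹) < 2 ∧
      ((lam ^ ((2*(r:ℝ))⁻¹)) ^ 2) ^ r = lam := by
  have hrn : (0:ℝ) < r := by exact_mod_cast (by omega : 0 < r)
  have he : (2*(r:ℝ))⁻¹ * (2 * r) = 1 := by field_simp
  refine ⟨Real.rpow_pos_of_pos h0 _, ?_, ?_⟩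
  · have hlt : lam ^ ((2*(r:ℝ))⁻¹) < ((4:ℝ) ^ r) ^ ((2*(r:ℝ))⁻¹) :=
      Real.rpow_lt_rpow h0.le h4 (by positivity)
    have heq : ((4:ℝ) ^ r) ^ ((2*(r:ℝ))⁻¹) = 2 := by
      rw [show (4:ℝ) = 2^2 by norm_num, ← pow_mul,
        ← Real.rpow_natCast 2 (2*r), ← Real.rpow_mul (by norm_num : (0:ℝ) ≤ 2)]
      push_cast
      rw [mul_comm ((2:ℝ)*r) _, he, Real.rpow_one]
    linarith [hlt, heq.le, heq.ge]
  · rw [← pow_mul, ← Real.rpow_natCast (lam ^ _) (2*r), ← Real.rpow_mul h0.le]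
    push_cast
    rw [he, Real.rpow_one]

set_option maxHeartbeats 1000000 in
private lemma root_facts {r : ℕ} (hr : 2 ≤ r) {lam : ℝ} (h0 : 0 < lam) (h4 : lam < 4 ^ r)
    {ρ : ℂ} (h : (1 - ρ) ^ (2 * r) - (-1) ^ r * (lam : ℂ) * ρ ^ r = 0) :
    ρ ≠ 0 ∧ (2 - ρ - ρ⁻¹) ^ r = (lam : ℂ) ∧
      ‖2 - ρ - ρ⁻¹‖ = (lam ^ ((2*(r:ℝ))⁻¹)) ^ 2 ∧
      ‖1 - ρ‖ ≤ 5/2 * lam ^ ((2*(r:ℝ))⁻¹) ∧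
      1/6 ≤ ‖ρ‖ ∧ ‖ρ‖ ≤ 6 := by
  obtain ⟨ht0, ht2, hts⟩ := lam_facts hr h0 h4
  set t : ℝ := lam ^ ((2*(r:ℝ))⁻¹) with htdef
  have hρ0 : ρ ≠ 0 := by
    rintro rfl
    simp only [sub_zero, one_pow, ne_eq, zero_pow (by omega : r ≠ 0), mul_zero, sub_zero] at h
    exact one_ne_zero h
  set μ : ℂ := 2 - ρ - ρ⁻¹ with hμdef
  have hμρ : μ * ρ = -(1 - ρ)^2 := by
    rw [hμdef]
    field_simp
    ring
  have heq : (1 - ρ) ^ (2*r) = (-1)^r * (lam:ℂ) * ρ^r := by linear_combination h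
  have hμr : μ ^ r = (lam : ℂ) := by
    have hc : (μ * ρ) ^ r = (lam:ℂ) * ρ ^ r := by
      rw [hμρ, neg_pow, ← pow_mul, heq]
      have hone : ((-1:ℂ))^r * (-1)^r = 1 := by rw [← mul_pow]; norm_num
      linear_combination ((lam:ℂ) * ρ^r) * hone
    rw [mul_pow] at hc
    exact mul_right_cancel₀ (pow_ne_zero r hρ0) hc
  have habsμ : ‖μ‖ = t ^ 2 := by
    have h1 : ‖μ‖ ^ r = (t^2) ^ r := by
      rw [← norm_pow, hμr, hts, Complex.norm_real, Real.norm_eq_abs, abs_of_pos h0]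
    have h2 : ∀ a b : ℝ, 0 ≤ a → 0 ≤ b → a ^ r = b ^ r → a = b := by
      intro a b ha hb hab
      have hr0 : (r:ℝ) ≠ 0 := by positivity
      have ha' : a = (a ^ r) ^ ((r:ℝ)⁻¹) := by
        rw [← Real.rpow_natCast a r, ← Real.rpow_mul ha, mul_inv_cancel₀ hr0, Real.rpow_one]
      have hb' : b = (b ^ r) ^ ((r:ℝ)⁻¹) := by
        rw [← Real.rpow_natCast b r, ← Real.rpow_mul hb, mul_inv_cancel₀ hr0, Real.rpow_one]
      rw [ha', hb', hab]
    exact h2 _ _ (norm_nonneg μ) (by positivity) (by rw [h1])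
  have habs1ρ : ‖1 - ρ‖ ^ 2 = t^2 * ‖ρ‖ := by
    have := congrArg norm hμρ
    rw [norm_mul, habsμ] at this
    rw [norm_neg, norm_pow] at this
    linarith [this]
  set d : ℝ := ‖1 - ρ‖
  set m : ℝ := ‖ρ‖
  have hd0 : 0 ≤ d := norm_nonneg _
  have hm0 : 0 ≤ m := norm_nonneg _
  have hm1 : m ≤ 1 + d := by
    have h1 := norm_sub_le_norm_sub_add_norm_sub ρ 1 0
    rw [sub_zero, sub_zero, norm_sub_rev ρ 1] at h1
    simp only [norm_one] at h1
    linarith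
  have hm2 : 1 - d ≤ m := by
    have h1 := norm_add_le (1 - ρ) ρ
    rw [sub_add_cancel] at h1
    simp only [norm_one] at h1
    linarith
  have hdt : d ≤ 5/2 * t := by
    by_contra hcon
    push_neg at hcon
    have h1 : d * d ≤ t^2 * (1 + d) := by nlinarith [habs1ρ]
    nlinarith [mul_pos (by linarith [mul_pos (by norm_num : (0:ℝ) < 5/2) ht0] : (0:ℝ) < d - 5/2*t)
      (by nlinarith : (0:ℝ) < d + 5/2*t - t^2)]
  have hmlb : 1/6 ≤ m := by nlinarith [habs1ρ, sq_nonneg (m-1)]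
  have hmub : m ≤ 6 := by nlinarith [habs1ρ, sq_nonneg (m-1)]
  exact ⟨hρ0, hμr, habsμ, hdt, hmlb, hmub⟩

set_option maxHeartbeats 1000000 in
/-- Lower bound for roots belonging to distinct quadratic factors. -/
private lemma pair_lower {r : ℕ} (hr : 2 ≤ r) {lam : ℝ} (h0 : 0 < lam) (h4 : lam < 4 ^ r)
    {ρ ρ' : ℂ}
    (h : (1 - ρ) ^ (2 * r) - (-1) ^ r * (lam : ℂ) * ρ ^ r = 0)
    (h' : (1 - ρ') ^ (2 * r) - (-1) ^ r * (lam : ℂ) * ρ' ^ r = 0)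
    (hne : ρ ≠ ρ') (hinv : ρ * ρ' ≠ 1) :
    lam ^ ((2*(r:ℝ))⁻¹) / (315 * r) ≤ ‖ρ - ρ'‖ := by
  obtain ⟨ht0, ht2, hts⟩ := lam_facts hr h0 h4
  set t : ℝ := lam ^ ((2*(r:ℝ))⁻¹) with htdef
  obtain ⟨hρ0, hμr, habsμ, hd, hmlb, hmub⟩ := root_facts hr h0 h4 h
  obtain ⟨hρ0', hμr', habsμ', hd', hmlb', hmub'⟩ := root_facts hr h0 h4 h'
  set μ : ℂ := 2 - ρ - ρ⁻¹ with hμdef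
  set μ' : ℂ := 2 - ρ' - ρ'⁻¹ with hμ'def
  have hrR : (0:ℝ) < r := by exact_mod_cast (by omega : 0 < r)
  have hid : (μ - μ') * (ρ * ρ') = (ρ' - ρ) * (ρ * ρ' - 1) := by
    rw [hμdef, hμ'def]
    field_simp
    ring
  have hμ'0 : μ' ≠ 0 := by
    intro hz
    rw [hz, norm_zero] at habsμ'
    exact (pow_pos ht0 2).ne' habsμ'.symm
  have hμne : μ ≠ μ' := by
    intro hzz
    rw [hzz, sub_self, zero_mul] at hid
    rcases mul_eq_zero.mp hid.symm with h1 | h1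
    · exact hne (sub_eq_zero.mp h1).symm
    · exact hinv (by linear_combination h1)
  have hw : (μ / μ') ^ r = 1 := by
    rw [div_pow, hμr, hμr', div_self]
    exact Complex.ofReal_ne_zero.mpr h0.ne'
  have hw1 : μ / μ' ≠ 1 := fun hc => hμne ((div_eq_one_iff_eq hμ'0).mp hc)
  have hwd := root_unity_dist (by omega) hw hw1
  have hBeq : ‖μ - μ'‖ = t^2 * ‖μ/μ' - 1‖ := by
    have : μ - μ' = μ' * (μ/μ' - 1) := by field_simp
    rw [this, norm_mul, habsμ']
  have hB : t^2 * (2/(r:ℝ)) ≤ ‖μ - μ'‖ := by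
    rw [hBeq]
    gcongr
  -- |ρρ' - 1| ≤ 35/2 t
  have hq : ‖ρ * ρ' - 1‖ ≤ 35/2 * t := by
    have hsplit : ρ * ρ' - 1 = ρ * (ρ' - 1) + (ρ - 1) := by ring
    calc ‖ρ * ρ' - 1‖ ≤ ‖ρ * (ρ' - 1)‖ + ‖ρ - 1‖ := by
          rw [hsplit]; exact norm_add_le _ _
      _ = ‖ρ‖ * ‖1 - ρ'‖ + ‖1 - ρ‖ := by
          rw [norm_mul, norm_sub_rev ρ' 1, norm_sub_rev ρ 1]
      _ ≤ 6 * (5/2 * t) + 5/2 * t := by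
          gcongr
      _ = 35/2 * t := by ring
  have habs_id : ‖μ - μ'‖ * (‖ρ‖ * ‖ρ'‖) =
      ‖ρ - ρ'‖ * ‖ρ * ρ' - 1‖ := by
    have := congrArg norm hid
    rw [norm_mul, norm_mul, norm_mul, norm_sub_rev ρ' ρ] at this
    linarith [this]
  have hA0 : 0 ≤ ‖ρ - ρ'‖ := norm_nonneg _
  have hchain : t^2 * (2/(r:ℝ)) * (1/6) * (1/6) ≤ ‖ρ - ρ'‖ * (35/2 * t) := by
    calc t^2 * (2/(r:ℝ)) * (1/6) * (1/6)
        ≤ ‖μ - μ'‖ * ‖ρ‖ * ‖ρ'‖ := by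
          gcongr
      _ = ‖μ - μ'‖ * (‖ρ‖ * ‖ρ'‖) := by ring
      _ = ‖ρ - ρ'‖ * ‖ρ * ρ' - 1‖ := habs_id
      _ ≤ ‖ρ - ρ'‖ * (35/2 * t) := by gcongr
  rw [div_le_iff₀ (by positivity)]
  have hL : t^2*(2/(r:ℝ))*(1/6)*(1/6)*(r:ℝ) = t^2/18 := by field_simp; ring
  nlinarith [mul_le_mul_of_nonneg_right hchain hrR.le, hL, mul_pos ht0 ht0]

set_option maxHeartbeats 1000000 in
/-- Lower bound for the pair `ρ, ρ⁻¹`. -/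
private lemma inv_lower {r : ℕ} (hr : 2 ≤ r) {lam : ℝ} (h0 : 0 < lam) (h4 : lam < 4 ^ r)
    {ρ : ℂ} (h : (1 - ρ) ^ (2 * r) - (-1) ^ r * (lam : ℂ) * ρ ^ r = 0)
    (habs1 : ‖ρ‖ ≠ 1) :
    (lam ^ ((2*(r:ℝ))⁻¹))^2 * (4/(r:ℝ)) ≤ ‖ρ - ρ⁻¹‖ ^ 2 := by
  obtain ⟨ht0, ht2, hts⟩ := lam_facts hr h0 h4
  set t : ℝ := lam ^ ((2*(r:ℝ))⁻¹) with htdef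
  obtain ⟨hρ0, hμr, habsμ, hd, hmlb, hmub⟩ := root_facts hr h0 h4 h
  set μ : ℂ := 2 - ρ - ρ⁻¹ with hμdef
  have hrR : (0:ℝ) < r := by exact_mod_cast (by omega : 0 < r)
  set S : ℝ := t^2 with hSdef
  have hS0 : 0 < S := by positivity
  have hS4 : S < 4 := by nlinarith
  have hsq : (ρ - ρ⁻¹)^2 = μ * (μ - 4) := by
    rw [hμdef]
    field_simp
    ring
  have hSC : ((S:ℂ)) ^ r = (lam:ℂ) := by
    rw [← Complex.ofReal_pow, hts]
  have hSC0 : (S:ℂ) ≠ 0 := Complex.ofReal_ne_zero.mpr hS0.ne'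
  set ω : ℂ := μ / (S:ℂ) with hωdef
  have hωr : ω ^ r = 1 := by
    rw [hωdef, div_pow, hμr, hSC, div_self (Complex.ofReal_ne_zero.mpr h0.ne')]
  have hω1 : ω ≠ 1 := by
    intro hc
    have h1 : μ = (S:ℂ) := by
      rw [hωdef, div_eq_one_iff_eq hSC0] at hc
      exact hc
    have h2 : (2 - ρ - ρ⁻¹) * ρ = 2*ρ - ρ*ρ - 1 := by field_simp
    have hq : ρ * ρ - (2 - (S:ℂ)) * ρ + 1 = 0 := by
      have h1' : (2 - ρ - ρ⁻¹) = (S:ℂ) := by rw [← hμdef]; exact h1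
      linear_combination (-ρ) * h1' + h2
    exact habs1 (abs_eq_one_of_quad hS0 hS4 hq)
  have hωd := root_unity_dist (by omega) hωr hω1
  have habsω : ‖ω‖ = 1 := by
    rw [hωdef, norm_div, habsμ, Complex.norm_real, Real.norm_eq_abs, abs_of_pos hS0, hSdef, div_self]
    positivity
  have hμω : μ = (S:ℂ) * ω := by
    rw [hωdef]
    field_simp
  have h1 : 4 - S ≤ ‖μ - 4‖ := by
    have hls := norm_sub_norm_le (4:ℂ) μ
    rw [norm_sub_rev (4:ℂ) μ] at hls
    have h4' : ‖(4:ℂ)‖ = 4 := by norm_num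
    rw [h4', habsμ] at hls
    exact hls
  have h2 : 4 * ‖ω - 1‖ - (4 - S) ≤ ‖μ - 4‖ := by
    have hidd : μ - 4 = 4*(ω - 1) - ((4:ℂ) - (S:ℂ))*ω := by
      rw [hμω]; ring
    have := norm_sub_norm_le (4*(ω - 1)) (((4:ℂ) - (S:ℂ))*ω)
    rw [← hidd] at this
    have e1 : ‖4*(ω-1)‖ = 4 * ‖ω - 1‖ := by
      rw [norm_mul]
      norm_num
    have e2 : ‖(((4:ℂ) - (S:ℂ))*ω)‖ = 4 - S := by
      have h4S : (0:ℝ) < 4 - S := by linarith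
      rw [norm_mul, habsω, mul_one, ← Complex.ofReal_ofNat, ← Complex.ofReal_sub,
        Complex.norm_real, Real.norm_eq_abs, abs_of_pos h4S]
    rw [e1, e2] at this
    linarith
  have hfin : 4/(r:ℝ) ≤ ‖μ - 4‖ := by
    rcases le_or_gt (4 - S) (4/(r:ℝ)) with hc | hc
    · have hm := mul_le_mul_of_nonneg_left hωd (by norm_num : (0:ℝ) ≤ 4)
      have he : (4:ℝ) * (2/(r:ℝ)) = 8 / r := by ring
      rw [he] at hm
      have h8 : (8:ℝ)/r - 4/r = 4/r := by ring
      linarith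
    · linarith
  have hfin2 : ‖ρ - ρ⁻¹‖ ^ 2 = S * ‖μ - 4‖ := by
    rw [← norm_pow, hsq, norm_mul, habsμ]
  rw [hfin2]
  calc S * (4/(r:ℝ)) ≤ S * ‖μ - 4‖ := by gcongr
    _ = S * ‖μ - 4‖ := rfl

set_option maxHeartbeats 1000000 in
theorem root_distance_bounds :
    ∃ C c c₁ c₂ : ℝ, 0 < C ∧ 0 < c ∧ 1 < c₁ ∧ 0 < c₂ ∧
      ∀ (r : ℕ), 2 ≤ r → ∀ (lam : ℝ), 0 < lam → lam < 4 ^ r →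
        ∀ ρ ρ' : ℂ,
          (1 - ρ) ^ (2 * r) - (-1) ^ r * (lam : ℂ) * ρ ^ r = 0 →
          (1 - ρ') ^ (2 * r) - (-1) ^ r * (lam : ℂ) * ρ' ^ r = 0 →
          ρ ≠ ρ' → ‖ρ‖ ≠ 1 →
          ‖ρ - ρ'‖ ≤ C * lam ^ ((2 * (r : ℝ))⁻¹) ∧
          ((ρ' = (starRingEnd ℂ) ρ ∨ ρ' = ρ⁻¹) →
            c₂ * (c₁ ^ r)⁻¹ * lam ^ ((2 * (r : ℝ))⁻¹) ≤ ‖ρ - ρ'‖) ∧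
          (¬(ρ' = (starRingEnd ℂ) ρ ∨ ρ' = ρ⁻¹) →
            c * ((r : ℝ) ^ 2)⁻¹ * lam ^ ((2 * (r : ℝ))⁻¹) ≤ ‖ρ - ρ'‖) := by
  refine ⟨5, 1/400, 2, 1/400, by norm_num, by norm_num, by norm_num, by norm_num, ?_⟩
  intro r hr lam h0 h4 ρ ρ' h h' hne habs1
  obtain ⟨ht0, ht2, hts⟩ := lam_facts hr h0 h4
  obtain ⟨hρ0, -, -, hd, hmlb, hmub⟩ := root_facts hr h0 h4 h
  obtain ⟨hρ0', -, -, hd', hmlb', hmub'⟩ := root_facts hr h0 h4 h'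
  have hrR : (0:ℝ) < r := by exact_mod_cast (by omega : 0 < r)
  set t : ℝ := lam ^ ((2*(r:ℝ))⁻¹) with htdef
  have hA0 : 0 ≤ ‖ρ - ρ'‖ := norm_nonneg _
  refine ⟨?_, ?_, ?_⟩
  · -- upper bound
    have htri := norm_sub_le_norm_sub_add_norm_sub ρ 1 ρ'
    rw [norm_sub_rev ρ 1] at htri
    calc ‖ρ - ρ'‖ ≤ ‖1 - ρ‖ + ‖1 - ρ'‖ := htri
      _ ≤ 5/2*t + 5/2*t := by linarith
      _ = 5 * t := by ring
  · -- conjugate / inverse case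
    rintro (hcj | hiv)
    · -- ρ' = conj ρ
      have hinv : ρ * ρ' ≠ 1 := by
        rw [hcj]
        intro hc
        rw [Complex.mul_conj] at hc
        have h1 : Complex.normSq ρ = 1 := by exact_mod_cast hc
        apply habs1
        have h2 : ‖ρ‖ ^ 2 = 1 := by rw [Complex.sq_norm, h1]
        nlinarith [norm_nonneg ρ]
      have hpair := pair_lower hr h0 h4 h h' hne hinv
      have hrle : (r:ℝ) ≤ 2^r := by exact_mod_cast (Nat.lt_two_pow_self (n := r)).le
      have h2r : (315:ℝ)*r ≤ 400*2^r := by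
        nlinarith [pow_pos (by norm_num : (0:ℝ) < 2) r]
      have e1 : (1/400:ℝ)*((2:ℝ)^r)⁻¹ = (400*(2:ℝ)^r)⁻¹ := by
        rw [mul_inv]; ring
      have e2 : ((400:ℝ)*(2:ℝ)^r)⁻¹ ≤ ((315:ℝ)*r)⁻¹ :=
        inv_anti₀ (by positivity) h2r
      calc (1/400:ℝ)*((2:ℝ)^r)⁻¹*t ≤ ((315:ℝ)*r)⁻¹ * t := by
            rw [e1]; exact mul_le_mul_of_nonneg_right e2 ht0.le
        _ = t / (315*r) := by rw [div_eq_inv_mul]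
        _ ≤ ‖ρ - ρ'‖ := hpair
    · -- ρ' = ρ⁻¹
      rw [hiv]
      have hsq2 := inv_lower hr h0 h4 h habs1
      rw [← htdef] at hsq2
      have hP0 : (0:ℝ) < (2:ℝ)^r := by positivity
      have hA0' : 0 ≤ ‖ρ - ρ⁻¹‖ := norm_nonneg _
      have hL0 : 0 ≤ (1/400:ℝ)*((2:ℝ)^r)⁻¹*t := by positivity
      have hP2 : ((2:ℝ)^r)^2 = 4^r := by
        rw [← pow_mul, mul_comm r 2, pow_mul]; norm_num
      have h4r : (r:ℝ) ≤ 4^r := by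
        exact_mod_cast (Nat.lt_pow_self (n := r) (by norm_num : 1 < 4)).le
      have hsqL : ((1/400:ℝ)*((2:ℝ)^r)⁻¹*t)^2 ≤ ‖ρ - ρ⁻¹‖^2 := by
        have e3 : ((1/400:ℝ)*((2:ℝ)^r)⁻¹*t)^2 = t^2 * (((4:ℝ)^r)⁻¹ / 160000) := by
          rw [← hP2]; field_simp; ring
        have i1 : ((4:ℝ)^r)⁻¹ ≤ (r:ℝ)⁻¹ := inv_anti₀ hrR h4r
        have i2 : ((4:ℝ)^r)⁻¹/160000 ≤ ((4:ℝ)^r)⁻¹ :=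
          div_le_self (by positivity) (by norm_num)
        have i3 : (r:ℝ)⁻¹ ≤ 4/r := by
          rw [div_eq_mul_inv]
          nlinarith [inv_nonneg.mpr hrR.le]
        have e4 : t^2 * (((4:ℝ)^r)⁻¹ / 160000) ≤ t^2 * (4/(r:ℝ)) := by
          have hXY : ((4:ℝ)^r)⁻¹ / 160000 ≤ 4/(r:ℝ) := by linarith
          exact mul_le_mul_of_nonneg_left hXY (sq_nonneg t)
        calc ((1/400:ℝ)*((2:ℝ)^r)⁻¹*t)^2 = t^2 * (((4:ℝ)^r)⁻¹ / 160000) := e3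
          _ ≤ t^2 * (4/(r:ℝ)) := e4
          _ ≤ ‖ρ - ρ⁻¹‖^2 := hsq2
      nlinarith [hsqL, hL0, hA0']
  · -- generic case
    intro hnot
    push_neg at hnot
    obtain ⟨hc1, hc2⟩ := hnot
    have hinv : ρ * ρ' ≠ 1 := fun hc => hc2 (eq_inv_of_mul_eq_one_right ?myhole)
    case myhole => exact hc
    have hpair := pair_lower hr h0 h4 h h' hne hinv
    have hr2 : (2:ℝ) ≤ r := by exact_mod_cast hr
    have h2r : (315:ℝ)*r ≤ 400*(r:ℝ)^2 := by
      nlinarith [mul_nonneg (by linarith : (0:ℝ) ≤ (r:ℝ) - 2) hrR.le]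
    have e1 : (1/400:ℝ)*((r:ℝ)^2)⁻¹ = (400*(r:ℝ)^2)⁻¹ := by
      rw [mul_inv]; ring
    have e2 : ((400:ℝ)*(r:ℝ)^2)⁻¹ ≤ ((315:ℝ)*r)⁻¹ :=
      inv_anti₀ (by positivity) h2r
    calc (1/400:ℝ)*((r:ℝ)^2)⁻¹*t ≤ ((315:ℝ)*r)⁻¹ * t := by
          rw [e1]; exact mul_le_mul_of_nonneg_right e2 ht0.le
      _ = t / (315*r) := by rw [div_eq_inv_mul]
      _ ≤ ‖ρ - ρ'‖ := hpair
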